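/- If instead the recursion β_{n+1} = βₙ when α_{n+1} ≠ αₙ and β_{n+1} = 1−βₙ when α_{n+1} = αₙ is used (with the same rule for β₁), then the resulting map is not well defined: there exists an s-adic rational whose two s-adic representations are assigned different values. -/

import Mathlib

open Set Filter

/-- Value of an `s`-adic code `α`: `∑ αₙ / sⁿ⁺¹`. -/
noncomputable def sval (s : ℕ) (α : ℕ → ℕ) : ℝ := ∑' n, (α n : ℝ) / (s : ℝ) ^ (n + 1)

/-- `α` is a sequence of digits in `{0, …, s−1}`. -/
def isDigits (s : ℕ) (α : ℕ → ℕ) : Prop := ∀ n, α n < s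

/-- The `s`-adic cylinder of rank `m` with base `c₀ … c_{m−1}`. -/
def cylinder (s m : ℕ) (c : ℕ → ℕ) : Set ℝ :=
  {x | ∃ α : ℕ → ℕ, isDigits s α ∧ (∀ i < m, α i = c i) ∧ x = sval s α}

/-- The sequence of output binary digits `βₙ`. -/
def betaSeq (A1 : Finset ℕ) (α : ℕ → ℕ) : ℕ → ℕ
  | 0 => if α 0 ∈ A1 then 1 else 0
  | n + 1 => if α (n + 1) = α n then betaSeq A1 α n else 1 - betaSeq A1 α n

/-- The flipped recursion: `β_{n+1} = βₙ` iff `α_{n+1} ≠ αₙ`. -/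
def betaSeq' (A1 : Finset ℕ) (α : ℕ → ℕ) : ℕ → ℕ
  | 0 => if α 0 ∈ A1 then 1 else 0
  | n + 1 => if α (n + 1) ≠ α n then betaSeq' A1 α n else 1 - betaSeq' A1 α n

lemma summable_sval (s : ℕ) (hs : 1 < s) (β : ℕ → ℕ) (hb : ∀ n, β n < s) :
    Summable (fun n => (β n : ℝ) / (s : ℝ) ^ (n + 1)) := by
  have hs0 : (0:ℝ) < s := by exact_mod_cast Nat.lt_of_lt_of_le Nat.zero_lt_one hs.le
  apply Summable.of_nonneg_of_le (f := fun n => ((s:ℝ)⁻¹) ^ n)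
  · intro n; positivity
  · intro n
    rw [div_le_iff₀ (by positivity)]
    have h1 : ((s:ℝ)⁻¹) ^ n * (s:ℝ) ^ (n+1) = s := by
      rw [pow_succ, ← mul_assoc, ← mul_pow, inv_mul_cancel₀ hs0.ne', one_pow, one_mul]
    rw [h1]
    exact_mod_cast (hb n).le
  · exact summable_geometric_of_lt_one (by positivity) (by
      rw [inv_lt_one_iff₀]; right; exact_mod_cast hs)

lemma beta0_le (A1 : Finset ℕ) (α : ℕ → ℕ) : betaSeq' A1 α 0 ≤ 1 := by
  unfold betaSeq'; split <;> omega

lemma beta_formula (A1 : Finset ℕ) (α : ℕ → ℕ) (h1 : α 1 ≠ α 0)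
    (h2 : ∀ n, 1 ≤ n → α (n+1) = α n) :
    ∀ n, 1 ≤ n → betaSeq' A1 α n
      = if n % 2 = 1 then betaSeq' A1 α 0 else 1 - betaSeq' A1 α 0 := by
  intro n hn
  induction n with
  | zero => omega
  | succ m ih =>
    rcases Nat.eq_zero_or_pos m with hm | hm
    · subst hm; simp [betaSeq', h1]
    · have hα : α (m+1) = α m := h2 m hm
      have hb := beta0_le A1 α
      have : betaSeq' A1 α (m+1) = 1 - betaSeq' A1 α m := by
        simp [betaSeq', hα]
      rw [this, ih hm]
      rcases Nat.even_or_odd m with he | ho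
      · have h1' : m % 2 = 0 := Nat.even_iff.mp he
        have h2' : (m+1) % 2 = 1 := by omega
        simp [h1', h2']; omega
      · have h1' : m % 2 = 1 := Nat.odd_iff.mp ho
        have h2' : (m+1) % 2 = 0 := by omega
        simp [h1', h2']

lemma geom_quarter : ∑' k : ℕ, (1/4 : ℝ) ^ k = 4/3 := by
  rw [tsum_geometric_of_lt_one (by norm_num) (by norm_num)]; norm_num

lemma sval_flip (A1 : Finset ℕ) (α : ℕ → ℕ) (h1 : α 1 ≠ α 0)
    (h2 : ∀ n, 1 ≤ n → α (n+1) = α n) :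
    sval 2 (betaSeq' A1 α) = (4 * (betaSeq' A1 α 0 : ℝ) + 1) / 6 := by
  have hb := beta0_le A1 α
  set b := betaSeq' A1 α 0 with hbdef
  have hβ : ∀ n, betaSeq' A1 α n < 2 := by
    intro n
    rcases Nat.eq_zero_or_pos n with h | h
    · subst h; omega
    · rw [beta_formula A1 α h1 h2 n h]; split <;> omega
  set f : ℕ → ℝ := fun n => (betaSeq' A1 α n : ℝ) / (2:ℝ) ^ (n+1) with hf
  have hsum : Summable f := by
    simpa using summable_sval 2 (by norm_num) (betaSeq' A1 α) hβ
  have hse : Summable (fun k => f (2*k)) :=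
    hsum.comp_injective (fun a b h => by omega)
  have hso : Summable (fun k => f (2*k+1)) :=
    hsum.comp_injective (fun a b h => by omega)
  have hcast : ((1 - b : ℕ) : ℝ) = 1 - (b:ℝ) := by
    rw [Nat.cast_sub hb]; norm_num
  have heven : ∑' k, f (2*k) = (b:ℝ)/2 + (1 - (b:ℝ))/6 := by
    rw [Summable.tsum_eq_zero_add hse]
    have h0 : f (2*0) = (b:ℝ)/2 := by norm_num [hf, hbdef]
    have hterm : ∀ k : ℕ, f (2*(k+1)) = (1 - (b:ℝ))/8 * (1/4:ℝ)^k := by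
      intro k
      have hfor := beta_formula A1 α h1 h2 (2*(k+1)) (by omega)
      have hm : (2*(k+1)) % 2 = 0 := by omega
      rw [hm] at hfor
      simp only [hf, hfor]
      rw [if_neg (by norm_num), hcast]
      have hp : (2:ℝ)^(2*(k+1)+1) = 8 * 4^k := by
        rw [show 2*(k+1)+1 = 2*k+3 by ring, pow_add, pow_mul]; norm_num [mul_comm]
      rw [hp, div_pow, one_pow]
      field_simp
      try ring
    rw [h0, tsum_congr hterm, tsum_mul_left, geom_quarter]
    ring
  have hodd : ∑' k, f (2*k+1) = (b:ℝ)/3 := by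
    have hterm : ∀ k : ℕ, f (2*k+1) = (b:ℝ)/4 * (1/4:ℝ)^k := by
      intro k
      have hfor := beta_formula A1 α h1 h2 (2*k+1) (by omega)
      have hm : (2*k+1) % 2 = 1 := by omega
      rw [hm] at hfor
      simp only [hf, hfor]
      rw [if_pos trivial]
      have hp : (2:ℝ)^(2*k+1+1) = 4 * 4^k := by
        rw [show 2*k+1+1 = 2*k+2 by ring, pow_add, pow_mul]; norm_num [mul_comm]
      rw [hp, div_pow, one_pow]
      field_simp
      try ring
    rw [tsum_congr hterm, tsum_mul_left, geom_quarter]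
    ring
  have := tsum_even_add_odd hse hso
  unfold sval
  push_cast
  rw [← this, heven, hodd]
  ring

/-- with the flipped recursion the map is not well defined: some `s`-adic
rational has two `s`-adic codes that are assigned different values. -/
theorem flipped_not_well_defined (s : ℕ) (hs : 2 < s) (A0 A1 : Finset ℕ)
    (hA : A0 ∪ A1 = Finset.range s) (hdisj : Disjoint A0 A1)
    (h0 : A0.Nonempty) (h1 : A1.Nonempty)
    (hc : ∃ c : ℕ, 1 ≤ c ∧ c < s ∧
      ((c ∈ A1 ∧ c - 1 ∈ A0) ∨ (c ∈ A0 ∧ c - 1 ∈ A1))) :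
    ∃ α α' : ℕ → ℕ, isDigits s α ∧ isDigits s α' ∧ sval s α = sval s α' ∧
      sval 2 (betaSeq' A1 α) ≠ sval 2 (betaSeq' A1 α') := by
  obtain ⟨c, hc1, hcs, hcase⟩ := hc
  have hsR : (2:ℝ) < s := by exact_mod_cast hs
  have hs0 : (0:ℝ) < s := by linarith
  have hs0' : (s:ℝ) ≠ 0 := ne_of_gt hs0
  have hs1' : (s:ℝ) - 1 ≠ 0 := by linarith
  refine ⟨fun n => if n = 0 then c else 0, fun n => if n = 0 then c - 1 else s - 1,
    ?_, ?_, ?_, ?_⟩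
  · intro n; dsimp only; split <;> omega
  · intro n; dsimp only; split <;> omega
  · have hv1 : sval s (fun n => if n = 0 then c else 0) = (c:ℝ) / s := by
      unfold sval
      rw [tsum_eq_single 0 (fun n hn => by simp [hn])]
      simp
    have hv2 : sval s (fun n => if n = 0 then c - 1 else s - 1) = (c:ℝ) / s := by
      unfold sval
      have hd' : ∀ n, (if n = 0 then c - 1 else s - 1) < s := by
        intro n; split <;> omega
      have hsum' := summable_sval s (by omega) _ hd'
      rw [Summable.tsum_eq_zero_add hsum']
      have hterm : ∀ n : ℕ,
          (((if n + 1 = 0 then c - 1 else s - 1 : ℕ)) : ℝ) / (s:ℝ) ^ (n + 1 + 1)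
            = ((s:ℝ) - 1) / (s:ℝ) ^ 2 * (1/(s:ℝ)) ^ n := by
        intro n
        rw [if_neg (Nat.succ_ne_zero n), Nat.cast_sub (by omega)]
        rw [show n + 1 + 1 = n + 2 by ring, pow_add, div_pow, one_pow]
        push_cast
        rw [div_mul_div_comm, mul_one, mul_comm ((s:ℝ)^2)]
      rw [tsum_congr hterm, tsum_mul_left,
        tsum_geometric_of_lt_one (by positivity)
          (by rw [div_lt_one hs0]; linarith)]
      rw [if_pos rfl, Nat.cast_sub hc1]
      push_cast
      field_simp
      ring
    rw [hv1, hv2]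
  · have key1 := sval_flip A1 (fun n => if n = 0 then c else 0)
      (by rw [if_neg one_ne_zero, if_pos rfl]; omega)
      (by intro n hn
          rw [if_neg (by omega : n + 1 ≠ 0), if_neg (by omega : n ≠ 0)])
    have key2 := sval_flip A1 (fun n => if n = 0 then c - 1 else s - 1)
      (by rw [if_neg one_ne_zero, if_pos rfl]; omega)
      (by intro n hn
          rw [if_neg (by omega : n + 1 ≠ 0), if_neg (by omega : n ≠ 0)])
    rw [key1, key2]
    have hb1 : betaSeq' A1 (fun n => if n = 0 then c else 0) 0
        = if c ∈ A1 then 1 else 0 := by simp [betaSeq']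
    have hb2 : betaSeq' A1 (fun n => if n = 0 then c - 1 else s - 1) 0
        = if c - 1 ∈ A1 then 1 else 0 := by simp [betaSeq']
    rw [hb1, hb2]
    rcases hcase with ⟨h_1, h_0⟩ | ⟨h_0, h_1⟩
    · have : c - 1 ∉ A1 := Finset.disjoint_left.mp hdisj h_0
      rw [if_pos h_1, if_neg this]; norm_num
    · have : c ∉ A1 := Finset.disjoint_left.mp hdisj h_0
      rw [if_neg this, if_pos h_1]; norm_num
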